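/- A subgroup of finite index in a finitely presented group is finitely presented. -/

import Mathlib

/-- A group is finitely presentable if it is isomorphic to `F/⟪R⟫` for a free
group `F` of finite rank and `R` the normal closure of a finite set of
relators. -/
def FinitelyPresentable (G : Type*) [Group G] : Prop :=
  ∃ (n : ℕ) (rels : Finset (FreeGroup (Fin n))),
    Nonempty (G ≃* PresentedGroup (rels : Set (FreeGroup (Fin n))))

/-- Packaging lemma: a group is finitely presentable if it is the quotient
of a finite-rank free group by the normal closure of a finite set. -/
lemma FinitelyPresentable.of_surjective_ker_eq {H : Type*} [Group H] {m : ℕ}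
    (S : Finset (FreeGroup (Fin m))) (φ : FreeGroup (Fin m) →* H)
    (hs : Function.Surjective φ)
    (hk : φ.ker = Subgroup.normalClosure (S : Set (FreeGroup (Fin m)))) :
    FinitelyPresentable H := by
  refine ⟨m, S, ⟨?_⟩⟩
  exact (QuotientGroup.quotientKerEquivOfSurjective φ hs).symm.trans
    (QuotientGroup.quotientMulEquivOfEq hk :
      FreeGroup (Fin m) ⧸ φ.ker ≃* PresentedGroup (S : Set (FreeGroup (Fin m))))

/-- A type over which the free group is finitely generated is finite. -/
lemma Finite.of_fg_freeGroup {β : Type*} (h : Group.FG (FreeGroup β)) : Finite β := by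
  have h1 : Group.FG (Abelianization (FreeGroup β)) :=
    @Group.fg_of_surjective _ _ _ _ h Abelianization.of
      (QuotientGroup.mk'_surjective _)
  have h2 : AddGroup.FG (FreeAbelianGroup β) :=
    @AddGroup.fg_of_group_fg (Abelianization (FreeGroup β)) _ h1
  have h3 : AddGroup.FG (β →₀ ℤ) :=
    @AddGroup.fg_of_surjective _ _ _ _ h2 (FreeAbelianGroup.equivFinsupp β).toAddMonoidHom
      (FreeAbelianGroup.equivFinsupp β).surjective
  have h4 : Module.Finite ℤ (β →₀ ℤ) := Module.Finite.iff_addGroup_fg.mpr h3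
  exact Module.Finite.finite_basis (Finsupp.basisSingleOne (R := ℤ) (ι := β))

/-- Reidemeister–Schreier relator lemma: if `N = ⟪s⟫` is the normal closure in `F`
of a finite set `s`, `N ≤ K`, and `K` has finite index, then `N` viewed inside `K`
is the normal closure (in `K`) of a finite set. -/
lemma subgroupOf_normalClosure_fg {F : Type*} [Group F] (N K : Subgroup F) [N.Normal]
    (hNK : N ≤ K) [Finite (F ⧸ K)] (s : Set F) (hs : s.Finite)
    (hN : N = Subgroup.normalClosure s) :
    ∃ S : Set K, S.Finite ∧ N.subgroupOf K = Subgroup.normalClosure S := by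
  classical
  -- right transversal elements
  let t : F → F := fun f => ((QuotientGroup.mk f⁻¹ : F ⧸ K)).out⁻¹
  have hkmem : ∀ f : F, f * (t f)⁻¹ ∈ K := by
    intro f
    have h1 : (↑((QuotientGroup.mk f⁻¹ : F ⧸ K)).out : F ⧸ K) = QuotientGroup.mk f⁻¹ :=
      QuotientGroup.out_eq' _
    rw [QuotientGroup.eq] at h1
    have := K.inv_mem h1
    simpa [t, mul_assoc] using this
  have hT : (Set.range t).Finite := by
    have : Set.range t ⊆ Set.range (fun q : F ⧸ K => (Quotient.out q)⁻¹) := by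
      rintro x ⟨f, rfl⟩; exact ⟨QuotientGroup.mk f⁻¹, rfl⟩
    exact (Set.finite_range _).subset this
  -- the conjugated relators
  let S0 : Set F := Set.image2 (fun τ r => τ * r * τ⁻¹) (Set.range t) s
  have hS0fin : S0.Finite := Set.Finite.image2 _ hT hs
  have hS0N : S0 ⊆ (N : Set F) := by
    rintro x ⟨τ, -, r, hr, rfl⟩
    have : r ∈ N := hN ▸ Subgroup.subset_normalClosure hr
    exact (‹N.Normal›.conj_mem r this τ)
  have hS0K : S0 ⊆ (K : Set F) := fun x hx => hNK (hS0N hx)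
  let S : Set K := (K.subtype) ⁻¹' S0
  have hSfin : S.Finite := hS0fin.preimage (Subtype.coe_injective.injOn)
  refine ⟨S, hSfin, ?_⟩
  have hsub : Subgroup.normalClosure S ≤ N.subgroupOf K := by
    apply Subgroup.normalClosure_le_normal
    intro x hx
    exact Subgroup.mem_subgroupOf.mpr (hS0N hx)
  refine le_antisymm ?_ hsub
  -- the hard inclusion
  intro x hx
  have hxN : (x : F) ∈ N := Subgroup.mem_subgroupOf.mp hx
  let M : Subgroup F := Subgroup.map K.subtype (Subgroup.normalClosure S)
  have hNM : N ≤ M := by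
    rw [hN]
    refine Subgroup.closure_le M |>.2 ?_
    intro a ha
    obtain ⟨b, hb, hc⟩ := Group.mem_conjugatesOfSet_iff.mp ha
    obtain ⟨c, hc⟩ := isConj_iff.mp hc
    subst hc
    -- write c = k * τ with k ∈ K, τ = t c
    have hkK : c * (t c)⁻¹ ∈ K := hkmem c
    have hτbτ : t c * b * (t c)⁻¹ ∈ S0 := ⟨t c, Set.mem_range_self c, b, hb, rfl⟩
    have hτbτK : t c * b * (t c)⁻¹ ∈ K := hS0K hτbτ
    have hyS : (⟨t c * b * (t c)⁻¹, hτbτK⟩ : K) ∈ S := hτbτ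
    have hymem : (⟨t c * b * (t c)⁻¹, hτbτK⟩ : K) ∈ Subgroup.normalClosure S :=
      Subgroup.subset_normalClosure hyS
    have hconj : (⟨c * (t c)⁻¹, hkK⟩ : K) * ⟨t c * b * (t c)⁻¹, hτbτK⟩ *
        (⟨c * (t c)⁻¹, hkK⟩ : K)⁻¹ ∈ Subgroup.normalClosure S :=
      Subgroup.normalClosure_normal.conj_mem _ hymem _
    refine ⟨_, hconj, ?_⟩
    show (c * (t c)⁻¹) * (t c * b * (t c)⁻¹) * (c * (t c)⁻¹)⁻¹ = c * b * c⁻¹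
    group
  obtain ⟨y, hy, hyx⟩ := hNM hxN
  rwa [show y = x from Subtype.coe_injective hyx] at hy

/-- A subgroup of finite index in a finitely presented group is finitely
presented. -/
theorem statement11 {G : Type*} [Group G] (hG : FinitelyPresentable G)
    (H : Subgroup G) [H.FiniteIndex] :
    FinitelyPresentable H := by
  classical
  obtain ⟨n, rels, ⟨e⟩⟩ := hG
  -- the presentation of `G`
  let φ : FreeGroup (Fin n) →* G :=
    e.symm.toMonoidHom.comp (PresentedGroup.mk (rels : Set (FreeGroup (Fin n))))
  have hφs : Function.Surjective φ := e.symm.surjective.comp (PresentedGroup.mk_surjective _)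
  have hker : φ.ker = Subgroup.normalClosure (rels : Set (FreeGroup (Fin n))) := by
    ext x
    rw [MonoidHom.mem_ker, MonoidHom.comp_apply, MulEquiv.coe_toMonoidHom,
      MulEquiv.map_eq_one_iff]
    exact QuotientGroup.eq_one_iff x
  -- the preimage subgroup `K` of `H`
  let K : Subgroup (FreeGroup (Fin n)) := H.comap φ
  have hKi : K.FiniteIndex := by
    constructor
    rw [Subgroup.index_comap_of_surjective _ hφs]
    exact Subgroup.FiniteIndex.index_ne_zero
  haveI := hKi
  have hFfg : Group.FG (FreeGroup (Fin n)) := by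
    rw [Group.fg_iff]
    exact ⟨Set.range FreeGroup.of, FreeGroup.closure_range_of _, Set.finite_range _⟩
  haveI := hFfg
  haveI : Group.FG K := Subgroup.fg_of_index_ne_zero K
  haveI : IsFreeGroup K := inferInstance
  -- `K` is free of finite rank
  haveI : Finite (IsFreeGroup.Generators K) := by
    refine Finite.of_fg_freeGroup (Group.fg_of_surjective
      (f := (IsFreeGroup.toFreeGroup (G := K)).toMonoidHom) ?_)
    exact (IsFreeGroup.toFreeGroup (G := K)).surjective
  obtain ⟨m, ⟨eqv⟩⟩ := Finite.exists_equiv_fin (IsFreeGroup.Generators K)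
  let ψ : FreeGroup (Fin m) ≃* K :=
    (FreeGroup.freeGroupCongr eqv.symm).trans (IsFreeGroup.toFreeGroup (G := K)).symm
  -- the restriction of `φ` to `K`, landing in `H`
  let π : K →* H := (φ.domRestrict K).codRestrict H (fun x => x.2)
  have hπs : Function.Surjective π := by
    rintro ⟨h, hh⟩
    obtain ⟨x, hx⟩ := hφs h
    exact ⟨⟨x, show φ x ∈ H from hx ▸ hh⟩, Subtype.ext hx⟩
  have hπker : π.ker = φ.ker.subgroupOf K := by
    ext x
    simp only [MonoidHom.mem_ker, Subgroup.mem_subgroupOf, π]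
    constructor
    · intro hx
      have := congrArg (Subtype.val) hx
      exact this
    · intro hx
      exact Subtype.ext hx
  -- apply the relator lemma
  have hNK : φ.ker ≤ K := by
    intro x hx
    show φ x ∈ H
    rw [MonoidHom.mem_ker] at hx
    rw [hx]; exact H.one_mem
  obtain ⟨S, hSfin, hEq⟩ := subgroupOf_normalClosure_fg φ.ker K hNK
    (rels : Set (FreeGroup (Fin n))) rels.finite_toSet hker
  -- transport along `ψ`
  let φ' : FreeGroup (Fin m) →* H := π.comp ψ.toMonoidHom
  have hφ's : Function.Surjective φ' := hπs.comp ψ.surjective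
  have hφ'ker : φ'.ker = Subgroup.normalClosure ((ψ : FreeGroup (Fin m) ≃* K) ⁻¹' S) := by
    rw [Subgroup.comap_normalClosure S ψ, ← hEq, ← hπker]
    exact (MonoidHom.comap_ker π ψ.toMonoidHom).symm ▸ rfl
  have hfin : ((ψ : FreeGroup (Fin m) ≃* K) ⁻¹' S).Finite :=
    hSfin.preimage (ψ.injective.injOn)
  refine FinitelyPresentable.of_surjective_ker_eq hfin.toFinset φ' hφ's ?_
  rw [hfin.coe_toFinset, hφ'ker]
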